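/- arXiv:1008.4860 — 5 statements merged into one kernel-verified Lean document; each statement's English description precedes it below -/
import Mathlib

section
/- Let 0 < p < 1 and let ω : ℂ → ℂ be holomorphic on the unit disk with |ω(z)| ≤ 1 for all |z| < 1. If p ≤ (√5 - 1)/2, then |2ω(p) + p·ω'(p)| ≤ 2. -/
open Metric Complex

noncomputable def mob (a z : ℂ) : ℂ := (a - z) / (1 - (starRingEnd ℂ) a * z)

lemma mob_denom_ne (a z : ℂ) (ha : ‖a‖ < 1) (hz : ‖z‖ < 1) :
    1 - (starRingEnd ℂ) a * z ≠ 0 := by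
  intro h
  have h1 : (starRingEnd ℂ) a * z = 1 := by linear_combination -h
  have : ‖(starRingEnd ℂ) a * z‖ < 1 := by
    rw [norm_mul, Complex.norm_conj]
    nlinarith [norm_nonneg a, norm_nonneg z]
  rw [h1] at this; simp at this

lemma mob_mem (a z : ℂ) (ha : ‖a‖ < 1) (hz : ‖z‖ < 1) :
    ‖mob a z‖ < 1 := by
  have hne := mob_denom_ne a z ha hz
  have hpos : 0 < ‖1 - (starRingEnd ℂ) a * z‖ := by
    simpa [norm_pos_iff] using hne
  rw [mob, norm_div, div_lt_one hpos]
  have key : Complex.normSq (1 - (starRingEnd ℂ) a * z) - Complex.normSq (a - z)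
      = (1 - Complex.normSq a) * (1 - Complex.normSq z) := by
    simp only [Complex.normSq_apply, Complex.sub_re, Complex.sub_im, Complex.one_re,
      Complex.one_im, Complex.mul_re, Complex.mul_im, Complex.conj_re, Complex.conj_im]
    ring
  have h1 : Complex.normSq a < 1 := by
    rw [← Complex.sq_norm]; nlinarith [norm_nonneg a]
  have h2 : Complex.normSq z < 1 := by
    rw [← Complex.sq_norm]; nlinarith [norm_nonneg z]
  have h3 : Complex.normSq (a - z) < Complex.normSq (1 - (starRingEnd ℂ) a * z) := by nlinarith
  have := (Real.sqrt_lt_sqrt (Complex.normSq_nonneg _) h3)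
  simpa [Complex.norm_def] using this

lemma mob_hasDerivAt (a z : ℂ) (hne : 1 - (starRingEnd ℂ) a * z ≠ 0) :
    HasDerivAt (mob a) (((starRingEnd ℂ) a * a - 1) / (1 - (starRingEnd ℂ) a * z) ^ 2) z := by
  have h1 : HasDerivAt (fun w => a - w) (-1) z := by
    simpa using ((hasDerivAt_id z).const_sub a)
  have h2 : HasDerivAt (fun w => 1 - (starRingEnd ℂ) a * w) (-(starRingEnd ℂ) a) z := by
    simpa using (((hasDerivAt_id z).const_mul ((starRingEnd ℂ) a)).const_sub 1)
  have := h1.div h2 hne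
  convert this using 1
  · rfl
  · rfl
  · rfl
  · ring

lemma schwarz_pick (f : ℂ → ℂ) (hf : DifferentiableOn ℂ f (Metric.ball 0 1))
    (hmaps : Set.MapsTo f (Metric.ball 0 1) (Metric.ball 0 1)) (p : ℝ) (hp0 : 0 ≤ p)
    (hp1 : p < 1) :
    ‖deriv f ↑p‖ * (1 - p ^ 2) ≤ 1 - ‖f ↑p‖ ^ 2 := by
  have hpabs : ‖(p : ℂ)‖ < 1 := by
    rw [Complex.norm_real, Real.norm_eq_abs]; rwa [_root_.abs_of_nonneg hp0]
  have hpball : (p : ℂ) ∈ Metric.ball (0 : ℂ) 1 := by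
    rwa [mem_ball_zero_iff]
  set a := f ↑p with ha_def
  have ha : ‖a‖ < 1 := mem_ball_zero_iff.1 (hmaps hpball)
  set s := Complex.normSq a with hs_def
  have hs1 : s < 1 := by rw [hs_def, ← Complex.sq_norm]; nlinarith [norm_nonneg a]
  have hs0 : (0:ℝ) ≤ s := Complex.normSq_nonneg a
  have hsne : (1 : ℂ) - (s : ℂ) ≠ 0 := by
    rw [show (1:ℂ) - (s:ℂ) = ((1 - s : ℝ) : ℂ) by push_cast; ring]
    exact_mod_cast (by linarith : (1 - s : ℝ) ≠ 0)
  -- the composed map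
  set g : ℂ → ℂ := mob a ∘ f ∘ mob ↑p with hg_def
  have hconjp : (starRingEnd ℂ) (p : ℂ) = (p : ℂ) := Complex.conj_ofReal p
  -- mob p maps & diff
  have hmobp_maps : Set.MapsTo (mob ↑p) (Metric.ball (0:ℂ) 1) (Metric.ball (0:ℂ) 1) := by
    intro z hz
    rw [mem_ball_zero_iff] at hz ⊢
    exact mob_mem _ _ hpabs hz
  have hmoba_maps : Set.MapsTo (mob a) (Metric.ball (0:ℂ) 1) (Metric.ball (0:ℂ) 1) := by
    intro z hz
    rw [mem_ball_zero_iff] at hz ⊢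
    exact mob_mem _ _ ha hz
  have hmobp_diff : DifferentiableOn ℂ (mob ↑p) (Metric.ball (0:ℂ) 1) := by
    intro z hz
    rw [mem_ball_zero_iff] at hz
    exact (mob_hasDerivAt _ _ (mob_denom_ne _ _ hpabs hz)).differentiableAt.differentiableWithinAt
  have hmoba_diff : DifferentiableOn ℂ (mob a) (Metric.ball (0:ℂ) 1) := by
    intro z hz
    rw [mem_ball_zero_iff] at hz
    exact (mob_hasDerivAt _ _ (mob_denom_ne _ _ ha hz)).differentiableAt.differentiableWithinAt
  have hg_diff : DifferentiableOn ℂ g (Metric.ball (0:ℂ) 1) :=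
    (hmoba_diff.comp (hf.comp hmobp_diff hmobp_maps) ((hmaps.comp hmobp_maps)))
  have hg_maps : Set.MapsTo g (Metric.ball (0:ℂ) 1) (Metric.ball (0:ℂ) 1) :=
    (hmoba_maps.comp (hmaps.comp hmobp_maps))
  have hmp0 : mob ↑p 0 = ↑p := by simp [mob]
  have hmaa : mob a a = 0 := by simp [mob]
  have hg0 : g 0 = 0 := by simp [hg_def, Function.comp, hmp0, ← ha_def, hmaa]
  -- derivatives
  have hEp : HasDerivAt (mob ↑p) ((p:ℂ) ^ 2 - 1) 0 := by
    have := mob_hasDerivAt ↑p 0 (by simp)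
    convert this using 1
    simp [hconjp]
    ring
  have hfd : DifferentiableAt ℂ f ↑p := hf.differentiableAt (isOpen_ball.mem_nhds hpball)
  have hEf : HasDerivAt f (deriv f ↑p) (mob ↑p 0) := by
    rw [hmp0]; exact hfd.hasDerivAt
  have hconjaa : (starRingEnd ℂ) a * a = (s : ℂ) := by
    rw [hs_def]; rw [mul_comm, Complex.mul_conj]
  have hEa : HasDerivAt (mob a) (-(1 - (s:ℂ))⁻¹) (f (mob ↑p 0)) := by
    rw [hmp0, ← ha_def]
    have hne : 1 - (starRingEnd ℂ) a * a ≠ 0 := by rw [hconjaa]; exact hsne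
    have := mob_hasDerivAt a a hne
    rw [hconjaa] at this
    convert this using 1
    field_simp
    ring
  have hgd : HasDerivAt g (-(1 - (s:ℂ))⁻¹ * (deriv f ↑p * ((p:ℂ) ^ 2 - 1))) 0 :=
    hEa.comp 0 (hEf.comp 0 hEp)
  -- Schwarz lemma
  have hb : ‖deriv g 0‖ ≤ 1 :=
    Complex.norm_deriv_le_one_of_mapsTo_ball hg_diff (by rw [hg0]; exact hg_maps.mono_right ball_subset_closedBall) one_pos
  rw [hgd.deriv] at hb
  have habs : ‖-(1 - (s:ℂ))⁻¹ * (deriv f ↑p * ((p:ℂ) ^ 2 - 1))‖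
      = (1 - s)⁻¹ * (‖deriv f ↑p‖ * (1 - p ^ 2)) := by
    rw [norm_mul, norm_neg, norm_inv, norm_mul]
    have e1 : (1 : ℂ) - (s:ℂ) = ((1 - s : ℝ) : ℂ) := by push_cast; ring
    have e2 : (p:ℂ) ^ 2 - 1 = ((p ^ 2 - 1 : ℝ) : ℂ) := by push_cast; ring
    rw [e1, e2, Complex.norm_real, Real.norm_eq_abs, Complex.norm_real, Real.norm_eq_abs, _root_.abs_of_nonneg (by linarith),
      _root_.abs_of_nonpos (by nlinarith)]
    ring
  rw [habs] at hb
  have h1s : (0:ℝ) < 1 - s := by linarith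
  have hsq : ‖f ↑p‖ ^ 2 = s := by rw [← ha_def, Complex.sq_norm, hs_def]
  rw [hsq]
  calc ‖deriv f ↑p‖ * (1 - p ^ 2)
      = (1 - s) * ((1 - s)⁻¹ * (‖deriv f ↑p‖ * (1 - p ^ 2))) := by
        field_simp
    _ ≤ (1 - s) * 1 := by
        exact mul_le_mul_of_nonneg_left hb h1s.le
    _ = 1 - s := mul_one _

theorem stmt_5 (p : ℝ) (hp0 : 0 < p) (hp1 : p < 1)
    (hp : p ≤ (Real.sqrt 5 - 1) / 2)
    (ω : ℂ → ℂ) (hω : DifferentiableOn ℂ ω (Metric.ball 0 1))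
    (hb : ∀ z ∈ Metric.ball (0 : ℂ) 1, ‖ω z‖ ≤ 1) :
    ‖2 * ω p + p * deriv ω p‖ ≤ 2 := by
  have hpball : (p : ℂ) ∈ Metric.ball (0 : ℂ) 1 := by
    have : ‖(p : ℂ)‖ < 1 := by
      rw [Complex.norm_real, Real.norm_eq_abs, _root_.abs_of_nonneg hp0.le]; exact hp1
    rwa [mem_ball_zero_iff]
  have hpp : p ^ 2 + p ≤ 1 := by
    nlinarith [Real.sq_sqrt (by norm_num : (0:ℝ) ≤ 5), Real.sqrt_nonneg 5]
  set A := ‖2 * ω ↑p + ↑p * deriv ω ↑p‖ with hA_def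
  have hωp : ‖ω ↑p‖ ≤ 1 := hb _ hpball
  have hωd : DifferentiableAt ℂ ω ↑p := hω.differentiableAt (isOpen_ball.mem_nhds hpball)
  have hkey : ∀ c : ℝ, 0 < c → c < 1 → c * A ≤ 2 := by
    intro c hc0 hc1
    set f : ℂ → ℂ := fun z => (c : ℂ) * ω z with hf_def
    have hf_diff : DifferentiableOn ℂ f (Metric.ball 0 1) := hω.const_mul _
    have hf_maps : Set.MapsTo f (Metric.ball (0:ℂ) 1) (Metric.ball (0:ℂ) 1) := by
      intro z hz
      rw [mem_ball_zero_iff]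
      calc ‖(c:ℂ) * ω z‖ = c * ‖ω z‖ := by
            rw [norm_mul, Complex.norm_real, Real.norm_eq_abs, _root_.abs_of_nonneg hc0.le]
        _ ≤ c * 1 := mul_le_mul_of_nonneg_left (hb z hz) hc0.le
        _ < 1 := by linarith
    have hderiv : deriv f ↑p = (c : ℂ) * deriv ω ↑p := by
      rw [hf_def]; exact deriv_const_mul _ hωd
    have sp := schwarz_pick f hf_diff hf_maps p hp0.le hp1
    rw [hderiv] at sp
    set x := c * ‖ω ↑p‖ with hx_def
    have hfp : ‖f ↑p‖ = x := by
      rw [hf_def, norm_mul, Complex.norm_real, Real.norm_eq_abs, _root_.abs_of_nonneg hc0.le]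
    rw [hfp] at sp
    have habsd : ‖(c:ℂ) * deriv ω ↑p‖ = c * ‖deriv ω ↑p‖ := by
      rw [norm_mul, Complex.norm_real, Real.norm_eq_abs, _root_.abs_of_nonneg hc0.le]
    rw [habsd] at sp
    -- sp : c * abs (deriv ω p) * (1 - p^2) ≤ 1 - x^2
    have hx0 : 0 ≤ x := mul_nonneg hc0.le (norm_nonneg _)
    have hx1 : x ≤ 1 := by
      calc x ≤ c * 1 := mul_le_mul_of_nonneg_left hωp hc0.le
        _ ≤ 1 := by linarith
    have hA_le : A ≤ 2 * ‖ω ↑p‖ + p * ‖deriv ω ↑p‖ := by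
      rw [hA_def]
      calc ‖2 * ω ↑p + ↑p * deriv ω ↑p‖
          ≤ ‖2 * ω ↑p‖ + ‖↑p * deriv ω ↑p‖ := norm_add_le _ _
        _ = 2 * ‖ω ↑p‖ + p * ‖deriv ω ↑p‖ := by
            rw [norm_mul, norm_mul, Complex.norm_real, Real.norm_eq_abs, _root_.abs_of_nonneg hp0.le]
            norm_num
    have hp2 : (0:ℝ) < 1 - p ^ 2 := by nlinarith
    have hstep : c * A * (1 - p ^ 2) ≤ 2 * (1 - p ^ 2) := by
      have h1 : c * A * (1 - p ^ 2) ≤ (2 * x + p * (c * ‖deriv ω ↑p‖)) * (1 - p ^ 2) := by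
        have : c * A ≤ 2 * x + p * (c * ‖deriv ω ↑p‖) := by
          calc c * A ≤ c * (2 * ‖ω ↑p‖ + p * ‖deriv ω ↑p‖) :=
                mul_le_mul_of_nonneg_left hA_le hc0.le
            _ = 2 * x + p * (c * ‖deriv ω ↑p‖) := by rw [hx_def]; ring
        exact mul_le_mul_of_nonneg_right this hp2.le
      have h2 : (2 * x + p * (c * ‖deriv ω ↑p‖)) * (1 - p ^ 2)
          ≤ 2 * x * (1 - p ^ 2) + p * (1 - x ^ 2) := by
        have := mul_le_mul_of_nonneg_left sp hp0.le
        nlinarith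
      have h3 : 2 * x * (1 - p ^ 2) + p * (1 - x ^ 2) ≤ 2 * (1 - p ^ 2) := by
        nlinarith [mul_nonneg (sub_nonneg.2 hx1) (mul_nonneg hp0.le hx0),
          mul_nonneg (sub_nonneg.2 hx1) hp0.le]
      linarith
    exact le_of_mul_le_mul_right (by linarith) hp2
  by_contra h
  push_neg at h
  have hA0 : 0 < A := by linarith
  have hc0 : 0 < (2 + A) / (2 * A) := by positivity
  have hc1 : (2 + A) / (2 * A) < 1 := by
    rw [div_lt_one (by positivity)]; linarith
  have := hkey _ hc0 hc1
  rw [div_mul_eq_mul_div, mul_comm] at this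
  have : (2 + A) / 2 ≤ 2 := by
    have heq : A * (2 + A) / (2 * A) = (2 + A) / 2 := by
      field_simp
    linarith [heq ▸ this]
  linarith
end

section
/- Let 0 < p < 1 and let c_0, c_1 ∈ ℂ satisfy |c_0| ≤ 1 and |c_1| ≤ (1 - |c_0|^2)/(1 - p^2). Then |p^2(p^2 c_0^2 + 2p c_0) + 2p(1 - p^2)(p^2 c_0 c_1 + p^2 c_0^2 + p c_1 + c_0)| ≤ p(2p + 2x + 2p^2 x - 2p^2 x^3 - p^3 x^2) where x = |c_0|. -/
theorem stmt_9 (p : ℝ) (hp0 : 0 < p) (hp1 : p < 1)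
    (c₀ c₁ : ℂ) (h0 : ‖c₀‖ ≤ 1)
    (h1 : ‖c₁‖ ≤ (1 - ‖c₀‖ ^ 2) / (1 - p ^ 2)) :
    ‖((p : ℂ) ^ 2 * ((p : ℂ) ^ 2 * c₀ ^ 2 + 2 * p * c₀)
        + 2 * p * (1 - (p : ℂ) ^ 2) *
          ((p : ℂ) ^ 2 * c₀ * c₁ + (p : ℂ) ^ 2 * c₀ ^ 2 + p * c₁ + c₀))‖
      ≤ p * (2 * p + 2 * ‖c₀‖ + 2 * p ^ 2 * ‖c₀‖
        - 2 * p ^ 2 * ‖c₀‖ ^ 3 - p ^ 3 * ‖c₀‖ ^ 2) := by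
  have hp2 : (0:ℝ) < 1 - p ^ 2 := by nlinarith
  set x := ‖c₀‖ with hxdef
  set y := ‖c₁‖ with hydef
  have hx0 : 0 ≤ x := norm_nonneg _
  have hy0 : 0 ≤ y := norm_nonneg _
  have hy1 : y * (1 - p ^ 2) ≤ 1 - x ^ 2 := (le_div_iff₀ hp2).mp h1
  have hE : ((p : ℂ) ^ 2 * ((p : ℂ) ^ 2 * c₀ ^ 2 + 2 * p * c₀)
        + 2 * p * (1 - (p : ℂ) ^ 2) *
          ((p : ℂ) ^ 2 * c₀ * c₁ + (p : ℂ) ^ 2 * c₀ ^ 2 + p * c₁ + c₀))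
      = ((p^4 : ℝ) : ℂ) * c₀ ^ 2 + ((2*p^3 : ℝ) : ℂ) * c₀
        + ((2*p*(1-p^2)*p^2 : ℝ) : ℂ) * (c₀*c₁)
        + ((2*p*(1-p^2)*p^2 : ℝ) : ℂ) * c₀^2
        + ((2*p*(1-p^2)*p : ℝ) : ℂ) * c₁
        + ((2*p*(1-p^2) : ℝ) : ℂ) * c₀ := by push_cast; ring
  rw [hE]
  have habs : ∀ (r : ℝ) (z : ℂ), 0 ≤ r → ‖(r:ℂ)*z‖ = r * ‖z‖ := by
    intro r z hr
    rw [norm_mul, Complex.norm_real, Real.norm_of_nonneg hr]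
  have h1' : (0:ℝ) ≤ p^4 := by positivity
  have h2' : (0:ℝ) ≤ 2*p^3 := by positivity
  have h3' : (0:ℝ) ≤ 2*p*(1-p^2)*p^2 := by positivity
  have h4' : (0:ℝ) ≤ 2*p*(1-p^2)*p := by positivity
  have h5' : (0:ℝ) ≤ 2*p*(1-p^2) := by positivity
  have key : ‖(((p^4 : ℝ) : ℂ) * c₀ ^ 2 + ((2*p^3 : ℝ) : ℂ) * c₀
        + ((2*p*(1-p^2)*p^2 : ℝ) : ℂ) * (c₀*c₁)
        + ((2*p*(1-p^2)*p^2 : ℝ) : ℂ) * c₀^2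
        + ((2*p*(1-p^2)*p : ℝ) : ℂ) * c₁
        + ((2*p*(1-p^2) : ℝ) : ℂ) * c₀)‖
      ≤ p^4 * x^2 + 2*p^3 * x + 2*p*(1-p^2)*p^2 * (x*y)
        + 2*p*(1-p^2)*p^2 * x^2 + 2*p*(1-p^2)*p * y + 2*p*(1-p^2) * x := by
    refine le_trans (norm_add_le _ _) ?_
    refine add_le_add (le_trans (norm_add_le _ _) ?_) ?_
    · refine add_le_add (le_trans (norm_add_le _ _) ?_) ?_
      · refine add_le_add (le_trans (norm_add_le _ _) ?_) ?_
        · refine add_le_add (le_trans (norm_add_le _ _) ?_) ?_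
          · refine add_le_add ?_ ?_
            · rw [habs _ _ h1', norm_pow]
            · rw [habs _ _ h2']
          · rw [habs _ _ h3', norm_mul]
        · rw [habs _ _ h3', norm_pow]
      · rw [habs _ _ h4']
    · rw [habs _ _ h5']
  refine key.trans ?_
  have hmul : 2*p^2*(p*x+1) * (y*(1-p^2)) ≤ 2*p^2*(p*x+1) * (1-x^2) :=
    mul_le_mul_of_nonneg_left hy1 (by nlinarith)
  nlinarith [mul_nonneg (mul_nonneg (sq_nonneg (p*x)) (sub_nonneg.mpr hp1.le)) hp2.le,
    sq_nonneg x, mul_pos hp0 hp0]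
end

section
/- Let 0 < p ≤ (√5 - 1)/2, w_0 ∈ ℂ \ {0}, and c_0, c_1 ∈ ℂ with |c_0| ≤ 1 and |c_1| ≤ (1 - |c_0|^2)/(1 - p^2). Define a_0 = w_0 + (p^2 w_0/(1 - p^2)^2)(1 + p^2 c_0^2 + 2p c_0) + (2p w_0/(1 - p^2))(p^2 c_0 c_1 + p^2 c_0^2 + p c_1 + c_0). Then |a_0 - ((1 - p^2 + p^4)/(1 - p^2)^2) w_0| ≤ (p(2 + 2p - p^3)/(1 - p^2)^2)|w_0|. -/
set_option maxHeartbeats 1000000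


theorem stmt_15 (p : ℝ) (hp0 : 0 < p) (hp : p ≤ (Real.sqrt 5 - 1) / 2)
    (w₀ : ℂ) (hw : w₀ ≠ 0)
    (c₀ c₁ : ℂ) (h0 : ‖c₀‖ ≤ 1)
    (h1 : ‖c₁‖ ≤ (1 - ‖c₀‖ ^ 2) / (1 - p ^ 2))
    (a₀ : ℂ)
    (ha : a₀ = w₀ + ((p : ℂ) ^ 2 * w₀ / (1 - (p : ℂ) ^ 2) ^ 2) *
        (1 + (p : ℂ) ^ 2 * c₀ ^ 2 + 2 * p * c₀)
      + (2 * p * w₀ / (1 - (p : ℂ) ^ 2)) *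
        ((p : ℂ) ^ 2 * c₀ * c₁ + (p : ℂ) ^ 2 * c₀ ^ 2 + p * c₁ + c₀)) :
    ‖a₀ - ((1 - (p : ℂ) ^ 2 + (p : ℂ) ^ 4) / (1 - (p : ℂ) ^ 2) ^ 2) * w₀‖
      ≤ (p * (2 + 2 * p - p ^ 3) / (1 - p ^ 2) ^ 2) * ‖w₀‖ := by
  have hs5 : Real.sqrt 5 ^ 2 = 5 := Real.sq_sqrt (by norm_num)
  have hs5' : Real.sqrt 5 ≤ 3 := by nlinarith [Real.sqrt_nonneg 5]
  have hpe : p ^ 2 + p ≤ 1 := by nlinarith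
  have hp1 : p < 1 := by nlinarith
  have hq : (0:ℝ) < 1 - p ^ 2 := by nlinarith
  have hcast : (1 - (p:ℂ)^2) = ((1 - p^2 : ℝ) : ℂ) := by push_cast; ring
  have hqc : (1 - (p:ℂ)^2) ≠ 0 := by
    rw [hcast]; exact_mod_cast ne_of_gt hq
  set N : ℂ := 2*(p:ℂ)*c₀ + ((p:ℂ)^3*((p:ℂ)+2-2*(p:ℂ)^2))*c₀^2
      + 2*(p:ℂ)^2*(1-(p:ℂ)^2)*(1+(p:ℂ)*c₀)*c₁ with hN
  have key : a₀ - ((1 - (p:ℂ)^2 + (p:ℂ)^4)/(1-(p:ℂ)^2)^2) * w₀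
      = w₀ * N / (1-(p:ℂ)^2)^2 := by
    rw [ha, hN]; field_simp; ring
  rw [key, norm_div, norm_mul, norm_pow]
  have habs : ‖1 - (p:ℂ)^2‖ = 1 - p^2 := by
    rw [hcast, Complex.norm_real, Real.norm_eq_abs, abs_of_pos hq]
  rw [habs]
  set t := ‖c₀‖ with ht
  set s := ‖c₁‖ with hs
  have ht0 : 0 ≤ t := norm_nonneg _
  have hs0 : 0 ≤ s := norm_nonneg _
  have hs1 : s * (1 - p^2) ≤ 1 - t^2 := by
    rw [le_div_iff₀ hq] at h1
    linarith
  have hNb : ‖N‖ ≤ 2*p*t + p^3*(p+2-2*p^2)*t^2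
      + 2*p^2*(1-p^2)*(1+p*t)*s := by
    have h3 : ‖2*(p:ℂ)*c₀‖ = 2*p*t := by
      rw [norm_mul, norm_mul, Complex.norm_two, Complex.norm_real, Real.norm_eq_abs, abs_of_pos hp0]
    have h4 : ‖((p:ℂ)^3*((p:ℂ)+2-2*(p:ℂ)^2))*c₀^2‖
        = p^3*(p+2-2*p^2)*t^2 := by
      have : ((p:ℂ)^3*((p:ℂ)+2-2*(p:ℂ)^2)) = ((p^3*(p+2-2*p^2) : ℝ) : ℂ) := by
        push_cast; ring
      have hA : (0:ℝ) ≤ p^3*(p+2-2*p^2) := by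
        have hB : (0:ℝ) < p+2-2*p^2 := by nlinarith
        positivity
      rw [norm_mul, this, Complex.norm_real, Real.norm_eq_abs, norm_pow, abs_of_nonneg hA]
    have h5 : ‖2*(p:ℂ)^2*(1-(p:ℂ)^2)*(1+(p:ℂ)*c₀)*c₁‖
        ≤ 2*p^2*(1-p^2)*(1+p*t)*s := by
      rw [norm_mul, norm_mul, norm_mul, norm_mul, norm_pow, Complex.norm_two,
        Complex.norm_real, Real.norm_eq_abs, abs_of_pos hp0, habs]
      have h6 : ‖1+(p:ℂ)*c₀‖ ≤ 1 + p*t := by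
        calc ‖1+(p:ℂ)*c₀‖ ≤ ‖1‖ + ‖(p:ℂ)*c₀‖ :=
              norm_add_le _ _
          _ = 1 + p*t := by
              rw [norm_one, norm_mul, Complex.norm_real, Real.norm_eq_abs, abs_of_pos hp0]
      have hnn : (0:ℝ) ≤ 2 * p^2 * (1 - p^2) := by positivity
      calc 2 * p^2 * (1 - p^2) * ‖1+(p:ℂ)*c₀‖ * s
          ≤ 2 * p^2 * (1 - p^2) * (1 + p*t) * s := by
            apply mul_le_mul_of_nonneg_right _ hs0
            exact mul_le_mul_of_nonneg_left h6 hnn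
        _ = 2*p^2*(1-p^2)*(1+p*t)*s := by ring
    calc ‖N‖ ≤ ‖2*(p:ℂ)*c₀ + ((p:ℂ)^3*((p:ℂ)+2-2*(p:ℂ)^2))*c₀^2‖
          + ‖2*(p:ℂ)^2*(1-(p:ℂ)^2)*(1+(p:ℂ)*c₀)*c₁‖ := by
          rw [hN]; exact norm_add_le _ _
      _ ≤ ‖2*(p:ℂ)*c₀‖ + ‖((p:ℂ)^3*((p:ℂ)+2-2*(p:ℂ)^2))*c₀^2‖
          + ‖2*(p:ℂ)^2*(1-(p:ℂ)^2)*(1+(p:ℂ)*c₀)*c₁‖ := by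
          linarith [norm_add_le (2*(p:ℂ)*c₀) (((p:ℂ)^3*((p:ℂ)+2-2*(p:ℂ)^2))*c₀^2)]
      _ ≤ _ := by rw [h3, h4]; linarith
  have hfinal : ‖N‖ ≤ p * (2 + 2*p - p^3) := by
    have hc1 : 2*p^2*(1-p^2)*(1+p*t)*s ≤ 2*p^2*(1+p*t)*(1-t^2) := by
      have h7 : (0:ℝ) ≤ 2*p^2*(1+p*t) := by positivity
      calc 2*p^2*(1-p^2)*(1+p*t)*s = 2*p^2*(1+p*t) * (s*(1-p^2)) := by ring
        _ ≤ 2*p^2*(1+p*t) * (1-t^2) := mul_le_mul_of_nonneg_left hs1 h7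
        _ = 2*p^2*(1+p*t)*(1-t^2) := by ring
    have hu0 : (0:ℝ) ≤ 1 - t := by linarith
    have ha' : (0:ℝ) < 2*p+2*p^2-p^3+2*p^4 := by nlinarith
    have hh : (0:ℝ) ≤ 2*p*(1-p)*(1-p^2) + (1-t)*(2*(1-2*p)*(1+p^3))
        + (1-t)^2*(2*p+2*p^2-p^3+2*p^4) + 2*p^2*(1-t)^2*t := by
      rcases le_or_gt p (1/2) with hc | hc
      · have t1 : (0:ℝ) ≤ 2*p*(1-p)*(1-p^2) :=
          mul_nonneg (mul_nonneg (by linarith) (by linarith)) (by linarith)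
        have t2 : (0:ℝ) ≤ (1-t)*(2*(1-2*p)*(1+p^3)) := by
          apply mul_nonneg hu0
          have : (0:ℝ) ≤ 1-2*p := by linarith
          positivity
        have t3 : (0:ℝ) ≤ (1-t)^2*(2*p+2*p^2-p^3+2*p^4) := by positivity
        have t4 : (0:ℝ) ≤ 2*p^2*(1-t)^2*t := by positivity
        linarith
      · have hD : (0:ℝ) ≤ 4*(2*p+2*p^2-p^3+2*p^4)*(2*p*(1-p)*(1-p^2))
            - (2*(1-2*p)*(1+p^3))^2 := by
          have hqq : (0:ℝ) ≤ 2*p - 1 := by linarith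
          have hee : (0:ℝ) ≤ 1 - p - p^2 := by linarith
          nlinarith [mul_nonneg hqq hee, mul_nonneg (mul_nonneg hqq hqq) hee,
            mul_nonneg (mul_nonneg hqq hee) hee,
            mul_nonneg (mul_nonneg (mul_nonneg hqq hqq) hee) hee,
            mul_nonneg (mul_nonneg hqq hee) hp0.le, sq_nonneg (p-1), mul_pos hp0 hp0,
            mul_nonneg (mul_nonneg (mul_nonneg hqq hee) hp0.le) hp0.le]
        have hsq := sq_nonneg (2*(2*p+2*p^2-p^3+2*p^4)*(1-t) + 2*(1-2*p)*(1+p^3))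
        have t4 : (0:ℝ) ≤ 2*p^2*(1-t)^2*t := by positivity
        nlinarith [mul_nonneg t4 ha'.le]
    nlinarith [mul_nonneg hp0.le hh]
  rw [div_le_iff₀ (by positivity : (0:ℝ) < (1-p^2)^2)]
  have : p * (2 + 2 * p - p ^ 3) / (1 - p ^ 2) ^ 2 * ‖w₀‖ * (1 - p ^ 2) ^ 2
      = ‖w₀‖ * (p * (2 + 2*p - p^3)) := by
    field_simp
  rw [this]
  exact mul_le_mul_of_nonneg_left hfinal (norm_nonneg _)
end

section
/- Let 0 < p ≤ (√5 - 1)/2 and let a_{-1}, a_0, c_0, c_1 ∈ ℂ satisfy |c_0| ≤ 1, |c_1| ≤ (1 - |c_0|^2)/(1 - p^2), and a_{-1} - ((1 - p^2)/p) a_0 = (1 - p^2)/(1 + p^2) - (p^2/(1 + p^2))(2c_0 + p c_1). Then |a_{-1} - ((1 - p^2)/p) a_0| ≤ 1. -/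
theorem stmt_16 (p : ℝ) (hp0 : 0 < p) (hp : p ≤ (Real.sqrt 5 - 1) / 2)
    (am1 a₀ c₀ c₁ : ℂ) (h0 : ‖c₀‖ ≤ 1)
    (h1 : ‖c₁‖ ≤ (1 - ‖c₀‖ ^ 2) / (1 - p ^ 2))
    (hrel : am1 - ((1 - (p : ℂ) ^ 2) / p) * a₀
      = (1 - (p : ℂ) ^ 2) / (1 + (p : ℂ) ^ 2)
        - ((p : ℂ) ^ 2 / (1 + (p : ℂ) ^ 2)) * (2 * c₀ + p * c₁)) :
    ‖am1 - ((1 - (p : ℂ) ^ 2) / p) * a₀‖ ≤ 1 := by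
  rw [hrel]
  have h5 : Real.sqrt 5 ^ 2 = 5 := Real.sq_sqrt (by norm_num)
  have hq : p ^ 2 + p ≤ 1 := by nlinarith [Real.sqrt_nonneg 5]
  have hplt : p < 1 := by nlinarith
  have ht := norm_nonneg c₀
  have hs := norm_nonneg c₁
  have hden : (0:ℝ) < 1 - p ^ 2 := by nlinarith
  have h1' : (1 - p ^ 2) * ‖c₁‖ ≤ 1 - ‖c₀‖ ^ 2 := by
    rw [mul_comm]
    exact (le_div_iff₀ hden).mp h1
  have key : 2 * ‖c₀‖ + p * ‖c₁‖ ≤ 2 := by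
    nlinarith [h0, ht, hs, hp0.le, mul_nonneg hp0.le hs]
  have e1 : (1 - (p:ℂ) ^ 2) / (1 + (p:ℂ) ^ 2) = (((1 - p ^ 2) / (1 + p ^ 2) : ℝ) : ℂ) := by
    push_cast; ring
  have e2 : (p:ℂ) ^ 2 / (1 + (p:ℂ) ^ 2) = ((p ^ 2 / (1 + p ^ 2) : ℝ) : ℂ) := by
    push_cast; ring
  have hdp : (0:ℝ) < 1 + p ^ 2 := by positivity
  have hA : ‖(1 - (p:ℂ) ^ 2) / (1 + (p:ℂ) ^ 2)‖ = (1 - p ^ 2) / (1 + p ^ 2) := by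
    rw [e1, Complex.norm_real, Real.norm_of_nonneg (by positivity)]
  have hB : ‖(p:ℂ) ^ 2 / (1 + (p:ℂ) ^ 2)‖ = p ^ 2 / (1 + p ^ 2) := by
    rw [e2, Complex.norm_real, Real.norm_of_nonneg (by positivity)]
  have htri : ‖(1 - (p:ℂ) ^ 2) / (1 + (p:ℂ) ^ 2)
      - ((p:ℂ) ^ 2 / (1 + (p:ℂ) ^ 2)) * (2 * c₀ + p * c₁)‖
      ≤ (1 - p ^ 2) / (1 + p ^ 2)
        + p ^ 2 / (1 + p ^ 2) * (2 * ‖c₀‖ + p * ‖c₁‖) := by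
    refine (norm_sub_le _ _).trans ?_
    rw [hA, norm_mul, hB]
    gcongr
    refine (norm_add_le _ _).trans ?_
    rw [norm_mul, norm_mul, Complex.norm_two, Complex.norm_real, Real.norm_of_nonneg hp0.le]
  refine htri.trans ?_
  have hB2 : p ^ 2 / (1 + p ^ 2) * (2 * ‖c₀‖ + p * ‖c₁‖)
      ≤ p ^ 2 / (1 + p ^ 2) * 2 := by
    gcongr
  have hone : (1 - p ^ 2) / (1 + p ^ 2) + p ^ 2 / (1 + p ^ 2) * 2 = 1 := by
    field_simp; ring
  linarith
end

section
/- Let 0 < p < 1 and let f_θ(z) = (z - (p/(1 + p^2))(1 + e^{iθ})z^2)/((1 - z/p)(1 - zp)) for θ ∈ [0, 2π). Then the residue a_{-1} of f_θ at its simple pole z = p satisfies |a_{-1} + p^2/(1 - p^4)| = p^4/(1 - p^4). -/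
theorem stmt_18 (p : ℝ) (hp0 : 0 < p) (hp1 : p < 1) (θ : ℝ)
    (hθ : θ ∈ Set.Ico 0 (2 * Real.pi))
    (f : ℂ → ℂ)
    (hf : ∀ z : ℂ, f z = (z - ((p : ℂ) / (1 + (p : ℂ) ^ 2)) *
        (1 + Complex.exp (θ * Complex.I)) * z ^ 2) /
      ((1 - z / p) * (1 - z * p)))
    (a : ℂ)
    (ha : Filter.Tendsto (fun z : ℂ => (z - p) * f z)
      (nhdsWithin (p : ℂ) {(p : ℂ)}ᶜ) (nhds a)) :
    ‖a + (p : ℂ) ^ 2 / (1 - (p : ℂ) ^ 4)‖ = p ^ 4 / (1 - p ^ 4) := by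
  have hp4 : p ^ 4 < 1 := pow_lt_one₀ hp0.le hp1 (by norm_num)
  have hp0c : (p : ℂ) ≠ 0 := by exact_mod_cast hp0.ne'
  have hp2 : (1 : ℂ) + (p : ℂ) ^ 2 ≠ 0 := by
    intro h
    have : (1 : ℝ) + p ^ 2 = 0 := by exact_mod_cast h
    nlinarith
  have hpm : (1 : ℂ) - (p : ℂ) * p ≠ 0 := by
    intro h
    have : (1 : ℝ) - p * p = 0 := by exact_mod_cast h
    nlinarith
  set c : ℂ := ((p : ℂ) / (1 + (p : ℂ) ^ 2)) * (1 + Complex.exp (θ * Complex.I)) with hc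
  set g : ℂ → ℂ := fun z => -(p : ℂ) * ((z - c * z ^ 2) / (1 - z * p)) with hg
  have heq : (fun z : ℂ => (z - p) * f z) =ᶠ[nhdsWithin (p : ℂ) {(p : ℂ)}ᶜ] g := by
    filter_upwards [self_mem_nhdsWithin] with z hz
    have hzp : z - (p : ℂ) ≠ 0 := sub_ne_zero.mpr (by simpa using hz)
    rw [hf z]
    by_cases hd : (1 : ℂ) - z * p = 0
    · simp [hg, hd, div_eq_zero_iff]
    · have h1 : (1 : ℂ) - z / p ≠ 0 := by
        rw [sub_ne_zero]
        intro h
        apply hzp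
        field_simp at h
        linear_combination -h
      have hden : ((1 : ℂ) - z / p) * (1 - z * p) ≠ 0 := mul_ne_zero h1 hd
      simp only [hg]
      rw [mul_div_assoc', mul_div_assoc', div_eq_div_iff hden hd]
      field_simp
      ring
  have hgt : Filter.Tendsto g (nhdsWithin (p : ℂ) {(p : ℂ)}ᶜ) (nhds (g p)) := by
    apply Filter.Tendsto.mono_left _ nhdsWithin_le_nhds
    apply ContinuousAt.tendsto
    apply ContinuousAt.mul continuousAt_const
    exact ContinuousAt.div (by fun_prop) (by fun_prop) hpm
  have ha' : a = g p := tendsto_nhds_unique ha (hgt.congr' heq.symm)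
  have hval : a + (p : ℂ) ^ 2 / (1 - (p : ℂ) ^ 4)
      = (p : ℂ) ^ 4 * Complex.exp (θ * Complex.I) / (1 - (p : ℂ) ^ 4) := by
    have h4 : (1 : ℂ) - (p : ℂ) ^ 4 ≠ 0 := by
      intro h
      have : (1 : ℝ) - p ^ 4 = 0 := by exact_mod_cast h
      linarith
    have h2 : (1 : ℂ) - (p : ℂ) ^ 2 ≠ 0 := by rw [sq]; exact hpm
    rw [ha', hg, hc]
    field_simp
    ring
  rw [hval]
  rw [norm_div, norm_mul]
  have h4r : (0 : ℝ) < 1 - p ^ 4 := by linarith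
  rw [Complex.norm_exp_ofReal_mul_I]
  have : ((1 : ℂ) - (p : ℂ) ^ 4) = ((1 - p ^ 4 : ℝ) : ℂ) := by push_cast; ring
  rw [this, Complex.norm_real, Real.norm_eq_abs, abs_of_pos h4r]
  have : ((p : ℂ) ^ 4) = ((p ^ 4 : ℝ) : ℂ) := by push_cast; ring
  rw [this, Complex.norm_real, Real.norm_eq_abs, abs_of_pos (by positivity)]
  ring
end
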